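/- Let α > 0, t ≠ 0 real, and let ξ, η be real numbers with cosh ξ − cos η > 0 and cosh(ξ − 2t) − cos η > 0. Set ζ = α coth((ξ − iη)/2) ∈ ℂ. Then |ζ − α coth t|² = (α/sinh t)² (cosh(ξ − 2t) − cos η)/(cosh ξ − cos η). -/

import Mathlib

noncomputable def coth (x : ℝ) : ℝ := Real.cosh x / Real.sinh x

noncomputable def ccoth (w : ℂ) : ℂ := Complex.cosh w / Complex.sinh w

lemma sinh_eq_re_im (z : ℂ) :
    Complex.sinh z = (Real.sinh z.re * Real.cos z.im : ℝ) +
      (Real.cosh z.re * Real.sin z.im : ℝ) * Complex.I := by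
  conv_lhs => rw [← Complex.re_add_im z]
  rw [Complex.sinh_add, Complex.sinh_mul_I, Complex.cosh_mul_I]
  push_cast [← Complex.ofReal_sinh, ← Complex.ofReal_cosh, ← Complex.ofReal_sin,
    ← Complex.ofReal_cos]
  ring

lemma normSq_sinh' (z : ℂ) :
    Complex.normSq (Complex.sinh z) = (Real.cosh (2 * z.re) - Real.cos (2 * z.im)) / 2 := by
  rw [sinh_eq_re_im z, Complex.normSq_add_mul_I, Real.cosh_two_mul, Real.cos_two_mul]
  have h1 := Real.sin_sq_add_cos_sq z.im
  have h2 := Real.cosh_sq_sub_sinh_sq z.re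
  nlinarith [h1, h2]

theorem distance_to_image_charge_bispherical (α t ξ η : ℝ) (hα : 0 < α) (ht : t ≠ 0)
    (h1 : Real.cosh ξ - Real.cos η > 0) (h2 : Real.cosh (ξ - 2 * t) - Real.cos η > 0)
    (ζ : ℂ) (hζ : ζ = α * ccoth ((ξ - Complex.I * η) / 2)) :
    ‖ζ - (α * coth t : ℝ)‖ ^ 2 =
      (α / Real.sinh t) ^ 2 * (Real.cosh (ξ - 2 * t) - Real.cos η) / (Real.cosh ξ - Real.cos η) := by
  set w : ℂ := (↑ξ - Complex.I * ↑η) / 2 with hw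
  have hwre : w.re = ξ / 2 := by simp [hw]
  have hwim : w.im = -η / 2 := by simp [hw]
  have hsw : Complex.normSq (Complex.sinh w) = (Real.cosh ξ - Real.cos η) / 2 := by
    rw [normSq_sinh', hwre, hwim]
    rw [show (2:ℝ) * (ξ/2) = ξ by ring, show (2:ℝ) * (-η/2) = -η by ring, Real.cos_neg]
  have htw : Complex.normSq (Complex.sinh (↑t - w)) = (Real.cosh (ξ - 2 * t) - Real.cos η) / 2 := by
    rw [normSq_sinh']
    have ha : (↑t - w).re = t - ξ / 2 := by simp [hwre]
    have hb : (↑t - w).im = η / 2 := by simp [hwim]; ring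
    rw [ha, hb, show (2:ℝ) * (t - ξ/2) = -(ξ - 2*t) by ring, Real.cosh_neg,
      show (2:ℝ) * (η/2) = η by ring]
  have hst : Real.sinh t ≠ 0 := Real.sinh_ne_zero.mpr ht
  have hswne : Complex.sinh w ≠ 0 := by
    intro h
    rw [h, map_zero] at hsw
    linarith
  have hstc : Complex.sinh ↑t ≠ 0 := by
    rw [← Complex.ofReal_sinh]; exact_mod_cast hst
  clear_value w
  have key : ζ - (↑(α * coth t) : ℂ) =
      ↑α * Complex.sinh (↑t - w) / (Complex.sinh w * Complex.sinh ↑t) := by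
    have e1 : (↑(α * coth t) : ℂ) = ↑α * (Complex.cosh ↑t / Complex.sinh ↑t) := by
      unfold coth
      push_cast [← Complex.ofReal_sinh, ← Complex.ofReal_cosh]
      ring
    rw [hζ, e1, Complex.sinh_sub]
    unfold ccoth
    field_simp
  rw [Complex.sq_norm, key, Complex.normSq_div, Complex.normSq_mul, Complex.normSq_mul,
    htw, hsw, Complex.normSq_ofReal, ← Complex.ofReal_sinh, Complex.normSq_ofReal]
  field_simp
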